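/- Suppose n ≥ 1 and A ⊆ (ℤ/4ℤ)^n is progression-free. Then for every real ε with 0 < ε < 1/4, the number of cosets of F_n in (ℤ/4ℤ)^n containing at least 2^(nH(1/2−ε)+1) elements of A is less than 2^(nH(2ε)). -/

import Mathlib

/-- A set `A` in an additively written abelian group is progression-free if there do not
exist pairwise distinct `a, b, c ∈ A` with `a + b = 2c`. -/
def ProgressionFree {G : Type*} [AddCommGroup G] (A : Set G) : Prop :=
  ¬ ∃ a ∈ A, ∃ b ∈ A, ∃ c ∈ A, a ≠ b ∧ a ≠ c ∧ b ≠ c ∧ a + b = c + c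

/-- The binary entropy function `H(x) = -x log₂ x - (1-x) log₂ (1-x)`. -/
noncomputable def binEnt (x : ℝ) : ℝ :=
  -x * Real.logb 2 x - (1 - x) * Real.logb 2 (1 - x)

/-- `F_n = {g ∈ (ℤ/4ℤ)^n : 2g = 0}`, the subgroup of `(ℤ/4ℤ)^n` generated by its
involutions. -/
def Fsub (n : ℕ) : AddSubgroup (Fin n → ZMod 4) where
  carrier := {g | g + g = 0}
  add_mem' := by
    intro a b ha hb
    simp only [Set.mem_setOf_eq] at *
    calc a + b + (a + b) = (a + a) + (b + b) := by abel
    _ = 0 := by rw [ha, hb, add_zero]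
  zero_mem' := by simp
  neg_mem' := by
    intro a ha
    simp only [Set.mem_setOf_eq] at *
    rw [← neg_add, ha, neg_zero]

namespace CLPaux

open Finset

/-! ### Coordinate maps between `ZMod 4` and `ZMod 2` -/

def pr : ZMod 4 → ZMod 2 := fun u => if u.val % 2 = 0 then 0 else 1
def er : ZMod 4 → ZMod 2 := fun u => if u.val / 2 % 2 = 0 then 0 else 1
def lf : ZMod 2 → ZMod 4 := fun x => if x.val = 0 then 0 else 1

abbrev V2 (n : ℕ) := Fin n → ZMod 2

def prm {n : ℕ} (a : Fin n → ZMod 4) : V2 n := fun i => pr (a i)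
def erm {n : ℕ} (a : Fin n → ZMod 4) : V2 n := fun i => er (a i)
def lfm {n : ℕ} (x : V2 n) : Fin n → ZMod 4 := fun i => lf (x i)

lemma zmod4_key : ∀ u v w : ZMod 4,
    (u + v = w + w) ↔ (pr u = pr v ∧ pr u + er u + er v = pr w) := by decide

lemma zmod4_inj : ∀ u v : ZMod 4, pr u = pr v → er u = er v → u = v := by decide

lemma zmod4_mem : ∀ u : ZMod 4, (-u + lf (pr u)) + (-u + lf (pr u)) = 0 := by decide

lemma zmod4_lf_inj : ∀ p q : ZMod 2, (-lf p + lf q) + (-lf p + lf q) = 0 → p = q := by decide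

lemma zmod2_addself : ∀ u : ZMod 2, u + u = 0 := by decide

lemma v2_addself {n : ℕ} (v : V2 n) : v + v = 0 := funext fun i => zmod2_addself (v i)

lemma mem_Fsub {n : ℕ} (g : Fin n → ZMod 4) : g ∈ Fsub n ↔ g + g = 0 := Iff.rfl

/-! ### Monomials and their linear independence -/

def mon {n : ℕ} (T : Finset (Fin n)) : V2 n → ZMod 2 := fun v => ∏ i ∈ T, v i

lemma mon_apply_ind {n : ℕ} (T' T : Finset (Fin n)) :
    mon T' (fun i => if i ∈ T then 1 else 0) = if T' ⊆ T then 1 else 0 := by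
  by_cases h : T' ⊆ T
  · simp only [h, if_true, mon]
    apply Finset.prod_eq_one
    intro i hi
    simp [h hi]
  · simp only [h, if_false, mon]
    obtain ⟨i, hi, hni⟩ := Finset.not_subset.mp h
    exact Finset.prod_eq_zero hi (by simp [hni])

lemma mon_indep (n : ℕ) : LinearIndependent (ZMod 2) (fun T : Finset (Fin n) => mon T) := by
  rw [linearIndependent_iff']
  intro s g hsum T hT
  suffices H : ∀ m, ∀ T ∈ s, T.card = m → g T = 0 by exact H T.card T hT rfl
  intro m
  induction m using Nat.strong_induction_on with
  | _ m ih =>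
    intro T hT hTc
    have h0 := congrFun hsum (fun i => if i ∈ T then 1 else 0)
    rw [Finset.sum_apply] at h0
    simp only [Pi.smul_apply, smul_eq_mul, mon_apply_ind, Pi.zero_apply, mul_ite, mul_one,
      mul_zero, Finset.sum_ite_mem] at h0
    rw [← Finset.sum_filter] at h0
    rw [Finset.sum_eq_single_of_mem T (by simp [hT]) ?h1] at h0
    · exact h0
    · intro x hx hxne
      rw [Finset.mem_filter] at hx
      exact ih x.card (hTc ▸ Finset.card_lt_card (lt_of_le_of_ne hx.2 hxne)) x hx.1 rfl

/-! ### Delta functions -/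

def dfun {n : ℕ} (v : V2 n) : V2 n → ZMod 2 := fun w => if w = v then 1 else 0

lemma dfun_indep (n : ℕ) : LinearIndependent (ZMod 2) (fun v : V2 n => dfun v) := by
  rw [linearIndependent_iff']
  intro s g hsum v₀ hv₀
  have h0 := congrFun hsum v₀
  rw [Finset.sum_apply] at h0
  simp only [Pi.smul_apply, smul_eq_mul, Pi.zero_apply, dfun] at h0
  rw [Finset.sum_eq_single_of_mem v₀ hv₀ ?h1] at h0
  · simpa using h0
  · intro v _ hne
    simp [Ne.symm hne]

/-! ### Counting small sets -/

def smallF (n h : ℕ) : Finset (Finset (Fin n)) := Finset.univ.filter (fun T => T.card ≤ h)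

lemma smallF_card (n h : ℕ) :
    ((smallF n h).card : ℝ) = ∑ i ∈ Finset.range (h+1), (n.choose i : ℝ) := by
  have : (smallF n h).card = ∑ i ∈ Finset.range (h+1), n.choose i := by
    unfold smallF
    rw [Finset.card_eq_sum_card_fiberwise
      (f := Finset.card) (t := Finset.range (h+1))
      (fun T hT => Finset.mem_range.mpr (Nat.lt_succ_of_le ((Finset.mem_filter.mp hT).2)))]
    apply Finset.sum_congr rfl
    intro i hi
    have hih : i ≤ h := Nat.lt_succ_iff.mp (Finset.mem_range.mp hi)
    have heq : (Finset.univ.filter (fun T : Finset (Fin n) => T.card ≤ h)).filter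
        (fun T => T.card = i) = Finset.powersetCard i Finset.univ := by
      rw [Finset.powersetCard_eq_filter, Finset.powerset_univ, Finset.filter_filter]
      apply Finset.filter_congr
      intro T _
      constructor
      · rintro ⟨_, h2⟩; exact h2
      · intro h2; exact ⟨h2 ▸ hih, h2⟩
    rw [heq, Finset.card_powersetCard, Finset.card_univ, Fintype.card_fin]
  rw [this]; push_cast; ring

lemma compl_card (n D : ℕ) (hD : D < n) :
    (Finset.univ.filter (fun T : Finset (Fin n) => ¬ T.card ≤ D)).card
      = (smallF n (n - D - 1)).card := by
  unfold smallF
  apply Finset.card_nbij' (fun T => Tᶜ) (fun T => Tᶜ)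
  · intro T hT
    simp only [Finset.mem_coe, Finset.mem_filter, Finset.mem_univ, true_and, not_le] at *
    rw [Finset.card_compl, Fintype.card_fin]
    omega
  · intro T hT
    simp only [Finset.mem_coe, Finset.mem_filter, Finset.mem_univ, true_and, not_le] at *
    rw [Finset.card_compl, Fintype.card_fin]
    omega
  · intro T _; simp
  · intro T _; simp

lemma total_card (n D : ℕ) :
    (smallF n D).card + (Finset.univ.filter (fun T : Finset (Fin n) => ¬ T.card ≤ D)).card
      = 2 ^ n := by
  unfold smallF
  rw [Finset.card_filter_add_card_filter_not,
    Finset.card_univ, Fintype.card_finset, Fintype.card_fin]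

/-! ### Entropy bound -/

lemma two_rpow_logb {a : ℝ} (ha : 0 < a) : (2:ℝ) ^ (Real.logb 2 a) = a :=
  Real.rpow_logb (by norm_num) (by norm_num) ha

lemma E_eq (n : ℕ) (α : ℝ) (hα0 : 0 < α) (hα1 : α < 1) :
    (2:ℝ) ^ (-((n:ℝ) * binEnt α)) = α ^ (α * n) * (1-α) ^ ((1-α) * n) := by
  have h1α : (0:ℝ) < 1 - α := by linarith
  have : -((n:ℝ) * binEnt α) = Real.logb 2 α * (α * n) + Real.logb 2 (1-α) * ((1-α) * n) := by
    unfold binEnt; ring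
  rw [this, Real.rpow_add (by norm_num : (0:ℝ) < 2), Real.rpow_mul (by norm_num : (0:ℝ) ≤ 2),
    Real.rpow_mul (by norm_num : (0:ℝ) ≤ 2), two_rpow_logb hα0, two_rpow_logb h1α]

lemma term_ge (n i : ℕ) (α : ℝ) (hα0 : 0 < α) (hα2 : α ≤ 1/2) (hi : (i:ℝ) ≤ α * n) :
    α ^ (α * (n:ℝ)) * (1-α) ^ ((1-α) * (n:ℝ)) ≤ α ^ ((i:ℝ)) * (1-α) ^ ((n:ℝ) - i) := by
  have hα1 : α < 1 := by linarith
  have h1α : (0:ℝ) < 1 - α := by linarith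
  set r := α / (1-α) with hr
  have hr0 : 0 < r := div_pos hα0 h1α
  have hr1 : r ≤ 1 := by rw [div_le_one h1α]; linarith
  have hαr : α = (1-α) * r := by rw [hr]; field_simp
  have hpow : ∀ x : ℝ, α ^ x = (1-α) ^ x * r ^ x := by
    intro x
    conv_lhs => rw [hαr]
    rw [Real.mul_rpow (le_of_lt h1α) (le_of_lt hr0)]
  have key : ∀ x y : ℝ, x + y = (n:ℝ) → α ^ x * (1-α) ^ y = (1-α) ^ (n:ℝ) * r ^ x := by
    intro x y hxy
    rw [hpow, ← hxy, Real.rpow_add h1α]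
    ring
  rw [key (α * n) ((1-α) * n) (by ring), key (i:ℝ) ((n:ℝ) - i) (by ring)]
  have := Real.rpow_le_rpow_of_exponent_ge hr0 hr1 hi
  exact mul_le_mul_of_nonneg_left this (Real.rpow_nonneg (le_of_lt h1α) _)

lemma sum_choose_lt (n k : ℕ) (α : ℝ) (hα0 : 0 < α) (hα2 : α ≤ 1/2) (hn : 1 ≤ n)
    (hk : (k:ℝ) ≤ α * n) :
    (∑ i ∈ Finset.range (k+1), (n.choose i : ℝ)) < 2 ^ ((n:ℝ) * binEnt α) := by
  have hα1 : α < 1 := by linarith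
  have h1α : (0:ℝ) < 1 - α := by linarith
  have hkn : k < n := by
    have h1 : (1:ℝ) ≤ n := by exact_mod_cast hn
    have : (k:ℝ) < n := by nlinarith
    exact_mod_cast this
  set E : ℝ := α ^ (α * (n:ℝ)) * (1-α) ^ ((1-α) * (n:ℝ)) with hEdef
  have hE0 : 0 < E := mul_pos (Real.rpow_pos_of_pos hα0 _) (Real.rpow_pos_of_pos h1α _)
  have step1 : (∑ i ∈ Finset.range (k+1), (n.choose i : ℝ)) * E
      ≤ ∑ i ∈ Finset.range (k+1), (n.choose i : ℝ) * (α ^ i * (1-α) ^ (n - i)) := by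
    rw [Finset.sum_mul]
    apply Finset.sum_le_sum
    intro i hi
    have hik : i ≤ k := Nat.lt_succ_iff.mp (Finset.mem_range.mp hi)
    have hin : i ≤ n := le_of_lt (lt_of_le_of_lt hik hkn)
    have h1 : α ^ i * (1-α) ^ (n - i) = α ^ ((i:ℝ)) * (1-α) ^ ((n:ℝ) - i) := by
      rw [← Real.rpow_natCast α i, ← Real.rpow_natCast (1-α) (n - i),
        Nat.cast_sub hin]
    rw [h1]
    exact mul_le_mul_of_nonneg_left
      (term_ge n i α hα0 hα2 (le_trans (Nat.cast_le.mpr hik) hk)) (Nat.cast_nonneg _)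
  have step2 : ∑ i ∈ Finset.range (k+1), (n.choose i : ℝ) * (α ^ i * (1-α) ^ (n - i))
      < ∑ i ∈ Finset.range (n+1), (n.choose i : ℝ) * (α ^ i * (1-α) ^ (n - i)) := by
    apply Finset.sum_lt_sum_of_subset
      (Finset.range_subset_range.mpr (by omega)) (i := n) (by simp) (by simp; omega)
    · simp only [Nat.choose_self, Nat.cast_one]
      positivity
    · intro j _ _
      positivity
  have step3 : ∑ i ∈ Finset.range (n+1), (n.choose i : ℝ) * (α ^ i * (1-α) ^ (n - i)) = 1 := by
    have := add_pow α (1-α) n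
    simp only [add_sub_cancel, one_pow] at this
    calc ∑ i ∈ Finset.range (n+1), (n.choose i : ℝ) * (α ^ i * (1-α) ^ (n - i))
        = ∑ i ∈ Finset.range (n+1), α ^ i * (1-α) ^ (n - i) * (n.choose i : ℝ) := by
          apply Finset.sum_congr rfl; intro i _; ring
    _ = 1 := this.symm
  have hlt : (∑ i ∈ Finset.range (k+1), (n.choose i : ℝ)) * E < 1 := by
    calc _ ≤ _ := step1
    _ < _ := step2
    _ = 1 := step3
  have hE : E = 2 ^ (-((n:ℝ) * binEnt α)) := (E_eq n α hα0 hα1).symm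
  rw [← lt_div_iff₀ hE0] at hlt
  calc (∑ i ∈ Finset.range (k+1), (n.choose i : ℝ)) < 1 / E := hlt
  _ = 2 ^ ((n:ℝ) * binEnt α) := by
      rw [hE, Real.rpow_neg (by norm_num : (0:ℝ) ≤ 2)]
      simp

/-! ### The vanishing submodule -/

def vanish (n : ℕ) (S : Finset (V2 n)) : Submodule (ZMod 2) (V2 n → ZMod 2) where
  carrier := {f | ∀ v, v ∉ S → f v = 0}
  add_mem' := by
    intro f g hf hg v hv
    show f v + g v = 0
    rw [hf v hv, hg v hv, add_zero]
  zero_mem' := by intro v hv; rfl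
  smul_mem' := by
    intro a f hf v hv
    show a * f v = 0
    rw [hf v hv, mul_zero]

/-! ### The rank bound -/

theorem card_le_of_diag (n D h : ℕ)
    (hsplit : ∀ T U : Finset (Fin n), T.card ≤ D → U ⊆ T → h < (T \ U).card → U.card ≤ h)
    (c : Finset (Fin n) → ZMod 2)
    (P : V2 n → ZMod 2)
    (hP : P = ∑ T ∈ smallF n D, c T • mon T)
    (x : V2 n) (hPx : P x ≠ 0)
    (B : Finset (V2 n))
    (hdiag : ∀ y ∈ B, ∀ y' ∈ B, y ≠ y' → P (x + y + y') = 0) :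
    B.card ≤ 2 * (smallF n h).card := by
  classical
  have addself : ∀ v : V2 n, v + v = 0 := v2_addself
  set fam : V2 n → (V2 n → ZMod 2) := fun y y' => P (x + y + y') with hfam
  set bfun : Finset (Fin n) → (V2 n → ZMod 2) := fun t =>
    ∑ T ∈ Finset.univ.filter (fun T : Finset (Fin n) =>
      T.card ≤ D ∧ t ⊆ T ∧ h < (T \ t).card), c T • mon (T \ t) with hbfun
  set W1 : Submodule (ZMod 2) (V2 n → ZMod 2) :=
    Submodule.span (ZMod 2) (((smallF n h).image mon : Finset _) : Set _) with hW1
  set W2 : Submodule (ZMod 2) (V2 n → ZMod 2) :=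
    Submodule.span (ZMod 2) (((smallF n h).image bfun : Finset _) : Set _) with hW2
  have decomp : ∀ y : V2 n, fam y =
      (∑ T ∈ smallF n D, ∑ t ∈ T.powerset.filter (fun t => (T \ t).card ≤ h),
        (c T * ∏ i ∈ t, (x + y) i) • mon (T \ t))
      + ∑ t ∈ smallF n h, (∏ i ∈ t, (x + y) i) • bfun t := by
    intro y
    have step1 : fam y = ∑ T ∈ smallF n D, ∑ t ∈ T.powerset,
        (c T * ∏ i ∈ t, (x + y) i) • mon (T \ t) := by
      funext y'
      simp only [hfam, hP, Finset.sum_apply, Pi.smul_apply, smul_eq_mul]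
      apply Finset.sum_congr rfl
      intro T _
      have : mon T (x + y + y') = ∑ t ∈ T.powerset, (∏ i ∈ t, (x + y) i) * ∏ i ∈ T \ t, y' i := by
        rw [show mon T (x + y + y') = ∏ i ∈ T, ((x + y) i + y' i) from rfl]
        exact Finset.prod_add _ _ _
      rw [this, Finset.mul_sum]
      apply Finset.sum_congr rfl
      intro t _
      show c T * ((∏ i ∈ t, (x + y) i) * ∏ i ∈ T \ t, y' i)
        = (c T * ∏ i ∈ t, (x + y) i) * mon (T \ t) y'
      rw [show mon (T \ t) y' = ∏ i ∈ T \ t, y' i from rfl]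
      ring
    rw [step1]
    have step2 : ∀ T ∈ smallF n D, ∑ t ∈ T.powerset,
        (c T * ∏ i ∈ t, (x + y) i) • mon (T \ t)
        = (∑ t ∈ T.powerset.filter (fun t => (T \ t).card ≤ h),
            (c T * ∏ i ∈ t, (x + y) i) • mon (T \ t))
          + ∑ t ∈ T.powerset.filter (fun t => ¬ (T \ t).card ≤ h),
            (c T * ∏ i ∈ t, (x + y) i) • mon (T \ t) := by
      intro T _
      exact (Finset.sum_filter_add_sum_filter_not _ _ _).symm
    rw [Finset.sum_congr rfl step2, Finset.sum_add_distrib]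
    congr 1
    rw [Finset.sum_comm' (s' := fun t => Finset.univ.filter (fun T : Finset (Fin n) =>
        T.card ≤ D ∧ t ⊆ T ∧ h < (T \ t).card)) (t' := smallF n h) ?hmemiff]
    case hmemiff =>
      intro T t
      simp only [smallF, Finset.mem_filter, Finset.mem_univ, true_and, Finset.mem_powerset,
        not_le]
      constructor
      · rintro ⟨hTD, ht, hc⟩
        exact ⟨⟨hTD, ht, hc⟩, hsplit T t hTD ht hc⟩
      · rintro ⟨⟨hTD, ht, hc⟩, _⟩
        exact ⟨hTD, ht, hc⟩
    apply Finset.sum_congr rfl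
    intro t _
    rw [hbfun, Finset.smul_sum]
    apply Finset.sum_congr rfl
    intro T _
    rw [mul_comm, smul_smul]
  have hmem : ∀ y : V2 n, fam y ∈ W1 ⊔ W2 := by
    intro y
    rw [decomp y]
    apply Submodule.add_mem
    · apply Submodule.mem_sup_left
      apply Submodule.sum_mem
      intro T _
      apply Submodule.sum_mem
      intro t ht
      rw [Finset.mem_filter, Finset.mem_powerset] at ht
      apply Submodule.smul_mem
      apply Submodule.subset_span
      simp only [Finset.coe_image, Set.mem_image, Finset.mem_coe]
      exact ⟨T \ t, by simp [smallF, ht.2], rfl⟩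
    · apply Submodule.mem_sup_right
      apply Submodule.sum_mem
      intro t ht
      apply Submodule.smul_mem
      apply Submodule.subset_span
      simp only [Finset.coe_image, Set.mem_image, Finset.mem_coe]
      exact ⟨t, ht, rfl⟩
  have hind : LinearIndependent (ZMod 2) (fun y : ↥B => fam y.val) := by
    rw [linearIndependent_iff']
    intro s g hsum y₀ hy₀
    have h0 := congrFun hsum (y₀ : V2 n)
    rw [Finset.sum_apply] at h0
    simp only [Pi.smul_apply, smul_eq_mul, Pi.zero_apply] at h0
    rw [Finset.sum_eq_single_of_mem y₀ hy₀ ?h1] at h0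
    · have hxy : x + (y₀ : V2 n) + (y₀ : V2 n) = x := by
        rw [add_assoc, addself, add_zero]
      rw [show fam y₀.val y₀.val = P (x + y₀.val + y₀.val) from rfl, hxy] at h0
      exact (mul_eq_zero.mp h0).resolve_right hPx
    · intro y _ hne
      have hyy : (y : V2 n) ≠ (y₀ : V2 n) := fun hh => hne (Subtype.ext hh)
      rw [show fam y.val y₀.val = P (x + y.val + y₀.val) from rfl,
        hdiag y.val y.2 y₀.val y₀.2 hyy, mul_zero]
  have hfd : FiniteDimensional (ZMod 2) (V2 n → ZMod 2) := inferInstance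
  let fam' : ↥B → ↥(W1 ⊔ W2) := fun y => ⟨fam y.val, hmem y.val⟩
  have hind' : LinearIndependent (ZMod 2) fam' := by
    apply LinearIndependent.of_comp (W1 ⊔ W2).subtype
    exact hind
  have hcard : Fintype.card ↥B ≤ Module.finrank (ZMod 2) ↥(W1 ⊔ W2) :=
    hind'.fintype_card_le_finrank
  rw [Fintype.card_coe] at hcard
  have hr1 : Module.finrank (ZMod 2) ↥W1 ≤ (smallF n h).card :=
    le_trans (finrank_span_finset_le_card _) (Finset.card_image_le)
  have hr2 : Module.finrank (ZMod 2) ↥W2 ≤ (smallF n h).card :=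
    le_trans (finrank_span_finset_le_card _) (Finset.card_image_le)
  have := Submodule.finrank_add_le_finrank_add_finrank W1 W2
  omega

end CLPaux

open CLPaux Finset in
open scoped Classical in
theorem rich_cosets_bound (n : ℕ) (hn : 1 ≤ n)
    (A : Finset (Fin n → ZMod 4)) (hA : ProgressionFree (A : Set (Fin n → ZMod 4)))
    (ε : ℝ) (hε : 0 < ε) (hε' : ε < 1 / 4) :
    (Nat.card {Q : (Fin n → ZMod 4) ⧸ Fsub n |
        (2 : ℝ) ^ ((n : ℝ) * binEnt (1 / 2 - ε) + 1) ≤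
          ((A.filter fun a => (QuotientAddGroup.mk a : (Fin n → ZMod 4) ⧸ Fsub n) = Q).card : ℝ)} : ℝ)
      < (2 : ℝ) ^ ((n : ℝ) * binEnt (2 * ε)) := by
  set M : ℝ := (2 : ℝ) ^ ((n : ℝ) * binEnt (1 / 2 - ε) + 1) with hM
  have hM0 : 0 < M := Real.rpow_pos_of_pos (by norm_num) _
  -- the map from V2 n to the quotient
  set ρ : V2 n → (Fin n → ZMod 4) ⧸ Fsub n := fun x => QuotientAddGroup.mk (lfm x) with hρ
  have hmkρ : ∀ a : Fin n → ZMod 4,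
      (QuotientAddGroup.mk a : (Fin n → ZMod 4) ⧸ Fsub n) = ρ (prm a) := by
    intro a
    rw [hρ, QuotientAddGroup.eq]
    show (-a + lfm (prm a)) + (-a + lfm (prm a)) = 0
    funext i
    exact zmod4_mem (a i)
  have hρinj : Function.Injective ρ := by
    intro x x' hxx
    rw [hρ] at hxx
    have h1 := QuotientAddGroup.eq.mp hxx
    have h2 : (-lfm x + lfm x') + (-lfm x + lfm x') = 0 := h1
    funext i
    exact zmod4_lf_inj (x i) (x' i) (congrFun h2 i)
  have hkey : ∀ (a : Fin n → ZMod 4) (x : V2 n),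
      ((QuotientAddGroup.mk a : (Fin n → ZMod 4) ⧸ Fsub n) = ρ x) ↔ prm a = x := by
    intro a x
    rw [hmkρ a]
    exact ⟨fun hh => hρinj hh, fun hh => by rw [hh]⟩
  set S : Finset (V2 n) := Finset.univ.filter
    (fun x : V2 n => M ≤ ((A.filter (fun a => prm a = x)).card : ℝ)) with hSdef
  have hfiltereq : ∀ x : V2 n,
      A.filter (fun a => (QuotientAddGroup.mk a : (Fin n → ZMod 4) ⧸ Fsub n) = ρ x)
        = A.filter (fun a => prm a = x) := by
    intro x
    apply Finset.filter_congr
    intro a _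
    exact hkey a x
  have himg : {Q : (Fin n → ZMod 4) ⧸ Fsub n |
      M ≤ ((A.filter fun a =>
        (QuotientAddGroup.mk a : (Fin n → ZMod 4) ⧸ Fsub n) = Q).card : ℝ)} = ρ '' ↑S := by
    ext Q
    induction Q using QuotientAddGroup.induction_on with
    | H a =>
      simp only [Set.mem_setOf_eq]
      rw [hmkρ a, hfiltereq (prm a)]
      constructor
      · intro hQ
        exact ⟨prm a, by
          rw [Finset.mem_coe, hSdef, Finset.mem_filter]
          exact ⟨Finset.mem_univ _, hQ⟩, rfl⟩
      · rintro ⟨x, hx, hxQ⟩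
        have hxa : x = prm a := hρinj hxQ
        rw [Finset.mem_coe, hSdef, Finset.mem_filter, hxa] at hx
        exact hx.2
  have hcardeq : Nat.card {Q : (Fin n → ZMod 4) ⧸ Fsub n |
      M ≤ ((A.filter fun a =>
        (QuotientAddGroup.mk a : (Fin n → ZMod 4) ⧸ Fsub n) = Q).card : ℝ)} = S.card := by
    rw [himg, Nat.card_coe_set_eq, Set.ncard_image_of_injective _ hρinj, Set.ncard_coe_finset]
  rw [hcardeq]
  by_contra hcon
  push_neg at hcon
  -- hcon : 2 ^ ((n:ℝ) * binEnt (2 * ε)) ≤ S.card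
  have hn1 : (1:ℝ) ≤ n := by exact_mod_cast hn
  set k2 : ℕ := ⌈(2*ε) * n⌉₊ with hk2
  have hk21 : 1 ≤ k2 := by
    rw [hk2]
    exact Nat.one_le_iff_ne_zero.mpr (by
      intro hz
      have := Nat.ceil_eq_zero.mp hz
      nlinarith)
  have hk2n : k2 ≤ n := by
    rw [hk2]
    apply Nat.ceil_le.mpr
    nlinarith
  set D : ℕ := n - k2 with hD
  set h : ℕ := D / 2 with hh
  have hDn : D < n := by omega
  have hcompl : ((smallF n (n - D - 1)).card : ℝ) < 2 ^ ((n:ℝ) * binEnt (2*ε)) := by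
    have hnD1 : n - D - 1 = k2 - 1 := by omega
    rw [hnD1, smallF_card]
    have hceil : (k2:ℝ) < (2*ε) * n + 1 := Nat.ceil_lt_add_one (by positivity)
    have hc1 : ((k2 - 1 : ℕ) : ℝ) ≤ (2*ε) * n := by
      rw [Nat.cast_sub hk21]
      push_cast
      linarith
    have := sum_choose_lt n (k2 - 1) (2*ε) (by linarith) (by linarith) hn hc1
    have hgoal : k2 - 1 + 1 = k2 := by omega
    rw [hgoal] at this ⊢
    exact this
  have hS_gt_nat : (smallF n (n - D - 1)).card < S.card := by
    exact_mod_cast lt_of_lt_of_le hcompl (hcon.trans_eq rfl)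
  set W : Submodule (ZMod 2) (V2 n → ZMod 2) :=
    Submodule.span (ZMod 2) (((smallF n D).image mon : Finset _) : Set _) with hW
  set Z : Submodule (ZMod 2) (V2 n → ZMod 2) :=
    Submodule.span (ZMod 2) ((S.image dfun : Finset _) : Set _) with hZ
  have hWrank : Module.finrank (ZMod 2) ↥W = (smallF n D).card := by
    have hind := (mon_indep n).comp (Subtype.val : ↥(smallF n D) → _) Subtype.val_injective
    have h1 := finrank_span_eq_card hind
    rw [Fintype.card_coe] at h1
    have hset : (↑((smallF n D).image mon) : Set (V2 n → ZMod 2))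
        = Set.range ((fun T : Finset (Fin n) => mon T) ∘ (Subtype.val : ↥(smallF n D) → _)) := by
      rw [Set.range_comp, Subtype.range_coe, Finset.coe_image]
    rw [← h1, hW, hset]
  have hZrank : Module.finrank (ZMod 2) ↥Z = S.card := by
    have hind := (dfun_indep n).comp (Subtype.val : ↥S → _) Subtype.val_injective
    have h1 := finrank_span_eq_card hind
    rw [Fintype.card_coe] at h1
    have hset : (↑(S.image dfun) : Set (V2 n → ZMod 2))
        = Set.range ((fun v : V2 n => dfun v) ∘ (Subtype.val : ↥S → _)) := by
      rw [Set.range_comp, Subtype.range_coe, Finset.coe_image]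
    rw [← h1, hZ, hset]
  have hfull : Module.finrank (ZMod 2) ((V2 n) → ZMod 2) = 2 ^ n := by
    rw [Module.finrank_fintype_fun_eq_card]
    simp [Fintype.card_fun]
  have hsup : Module.finrank (ZMod 2) ↥(W ⊔ Z) ≤ 2 ^ n := hfull ▸ Submodule.finrank_le _
  have hsum := Submodule.finrank_sup_add_finrank_inf_eq W Z
  have htot := total_card n D
  have hcompl_nat := compl_card n D hDn
  have hpos : 0 < Module.finrank (ZMod 2) ↥(W ⊓ Z) := by
    rw [hWrank, hZrank] at hsum
    omega
  have hnebot : W ⊓ Z ≠ ⊥ := by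
    intro hbot
    rw [hbot, finrank_bot] at hpos
    exact lt_irrefl 0 hpos
  obtain ⟨P, hPmem, hPne⟩ := (W ⊓ Z).ne_bot_iff.mp hnebot
  have hPW : P ∈ W := (Submodule.mem_inf.mp hPmem).1
  have hPZ : P ∈ Z := (Submodule.mem_inf.mp hPmem).2
  have hvan : ∀ v, v ∉ S → P v = 0 := by
    have hle : Z ≤ vanish n S := by
      rw [hZ]
      apply Submodule.span_le.mpr
      intro g hg
      simp only [Finset.coe_image, Set.mem_image, Finset.mem_coe] at hg
      obtain ⟨s, hs, rfl⟩ := hg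
      intro v hv
      show (if v = s then (1:ZMod 2) else 0) = 0
      rw [if_neg]
      rintro rfl
      exact hv hs
    exact fun v hv => hle hPZ v hv
  have hmoninj : Function.Injective (fun T : Finset (Fin n) => mon T) :=
    (mon_indep n).injective
  obtain ⟨f, -, hf⟩ := Submodule.mem_span_finset.mp hPW
  have hrep : P = ∑ T ∈ smallF n D, (fun T => f (mon T)) T • mon T := by
    rw [← hf, Finset.sum_image (fun x _ y _ hxy => hmoninj hxy)]
  obtain ⟨x, hPx⟩ := Function.ne_iff.mp hPne
  have hxS : x ∈ S := by
    by_contra hxS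
    exact hPx (hvan x hxS)
  have hMx : M ≤ ((A.filter (fun a => prm a = x)).card : ℝ) := by
    have hx2 := hxS
    rw [hSdef, Finset.mem_filter] at hx2
    exact hx2.2
  set B : Finset (V2 n) := (A.filter (fun a => prm a = x)).image erm with hB
  have hBcard : B.card = (A.filter (fun a => prm a = x)).card := by
    rw [hB]
    apply Finset.card_image_of_injOn
    intro a ha b hb hab
    rw [Finset.mem_coe, Finset.mem_filter] at ha hb
    funext i
    exact zmod4_inj _ _
      (by rw [show pr (a i) = prm a i from rfl, show pr (b i) = prm b i from rfl, ha.2, hb.2])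
      (congrFun hab i)
  have hdiag : ∀ y ∈ B, ∀ y' ∈ B, y ≠ y' → P (x + y + y') = 0 := by
    intro y hy y' hy' hne
    rw [hB] at hy hy'
    obtain ⟨b, hb, rfl⟩ := Finset.mem_image.mp hy
    obtain ⟨b', hb', rfl⟩ := Finset.mem_image.mp hy'
    rw [Finset.mem_filter] at hb hb'
    apply hvan
    intro hmem
    rw [hSdef, Finset.mem_filter] at hmem
    have hpos' : (0:ℝ) <
        ((A.filter (fun a => prm a = x + erm b + erm b')).card : ℝ) :=
      lt_of_lt_of_le hM0 hmem.2
    have hpos'' : 0 < (A.filter (fun a => prm a = x + erm b + erm b')).card := by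
      exact_mod_cast hpos'
    obtain ⟨a, ha⟩ := Finset.card_pos.mp hpos''
    rw [Finset.mem_filter] at ha
    have hbb' : b ≠ b' := fun hcon' => hne (by rw [hcon'])
    have hcanc : ∀ {u v : V2 n}, u + v = 0 → u = v := by
      intro u v huv
      calc u = u + (v + v) := by rw [v2_addself, add_zero]
      _ = (u + v) + v := by abel
      _ = v := by rw [huv, zero_add]
    have hadd : b + b' = a + a := by
      funext i
      apply (zmod4_key (b i) (b' i) (a i)).mpr
      constructor
      · rw [show pr (b i) = prm b i from rfl, show pr (b' i) = prm b' i from rfl,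
          hb.2, hb'.2]
      · have h2 : pr (a i) = (x + erm b + erm b') i := by
          rw [show pr (a i) = prm a i from rfl, ha.2]
        rw [h2, show (x + erm b + erm b') i = x i + erm b i + erm b' i from rfl,
          show pr (b i) = prm b i from rfl, hb.2]
        rfl
    have hab : a ≠ b := by
      intro hconab
      have h1 : prm b = x + erm b + erm b' := by
        have hpp : prm b = prm a := by rw [hconab]
        rw [hpp, ha.2]
      have h2 : x = x + (erm b + erm b') := by
        rw [← add_assoc, ← h1, hb.2]
      have h3 : x + 0 = x + (erm b + erm b') := by rw [add_zero]; exact h2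
      exact hne (hcanc (add_left_cancel h3).symm)
    have hab' : a ≠ b' := by
      intro hconab
      have h1 : prm b' = x + erm b + erm b' := by
        have hpp : prm b' = prm a := by rw [hconab]
        rw [hpp, ha.2]
      have h2 : x = x + (erm b + erm b') := by
        rw [← add_assoc, ← h1, hb'.2]
      have h3 : x + 0 = x + (erm b + erm b') := by rw [add_zero]; exact h2
      exact hne (hcanc (add_left_cancel h3).symm)
    exact hA ⟨b, Finset.mem_coe.mpr hb.1, b', Finset.mem_coe.mpr hb'.1, a,
      Finset.mem_coe.mpr ha.1, hbb', (Ne.symm hab), (Ne.symm hab'), hadd⟩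
  have hsplit : ∀ T U : Finset (Fin n), T.card ≤ D → U ⊆ T → h < (T \ U).card → U.card ≤ h := by
    intro T U hT hU hTU
    have h1 := Finset.card_sdiff_of_subset hU
    have h2 := Finset.card_le_card hU
    omega
  have hle := card_le_of_diag n D h hsplit (fun T => f (mon T)) P hrep x hPx B hdiag
  have hhb : ((smallF n h).card : ℝ) < 2 ^ ((n:ℝ) * binEnt (1/2 - ε)) := by
    rw [smallF_card]
    apply sum_choose_lt n h (1/2 - ε) (by linarith) (by linarith) hn
    have hD2 : (D:ℝ) = (n:ℝ) - k2 := by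
      rw [hD, Nat.cast_sub hk2n]
    have hk2ge : (2*ε) * n ≤ (k2:ℝ) := Nat.le_ceil _
    have hh2 : (h:ℝ) ≤ (D:ℝ)/2 := by
      rw [hh]
      exact_mod_cast Nat.cast_div_le
    linarith
  have hchain : M ≤ (B.card : ℝ) := by rw [hBcard]; exact hMx
  have hfin : (B.card:ℝ) ≤ 2 * ((smallF n h).card : ℝ) := by exact_mod_cast hle
  have hMM : M < M := by
    calc M ≤ (B.card:ℝ) := hchain
    _ ≤ 2 * ((smallF n h).card : ℝ) := hfin
    _ < 2 * 2^((n:ℝ) * binEnt (1/2 - ε)) := by linarith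
    _ = M := by
        rw [hM, Real.rpow_add_one (by norm_num : (2:ℝ) ≠ 0)]
        ring
  exact lt_irrefl _ hMM
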